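/- Suppose $\phi$ is a tautology in the logic with $\neg$ and $\to$, containing no negations, with exactly one variable $p$ occurring exactly twice and all other variables occurring once. Then $\phi$ has the form $\psi_1 \to (\psi_2 \to (\cdots \to (\psi_k \to (p \to \eta))\cdots))$ (possibly with $k = 0$) where $\eta$ is negation-free, the rightmost variable of $\eta$ is $p$, and $\psi_1, \dots, \psi_k, \eta$ are negation-free formulae with no repeated variables and pairwise disjoint variable sets (apart from the prescribed two occurrences of $p$). -/

import Mathlib

/-- Well-formed formulae built from variables with negation and implication. -/
inductive Fml (V : Type) : Type
  | var : V → Fml V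
  | neg : Fml V → Fml V
  | imp : Fml V → Fml V → Fml V

namespace Fml
variable {V : Type}

/-- Boolean evaluation under an assignment `v : V → Bool`. -/
def eval (v : V → Bool) : Fml V → Bool
  | var p => v p
  | neg φ => !(eval v φ)
  | imp φ ψ => !(eval v φ) || eval v ψ

/-- The list of variable occurrences (leaves, left to right). -/
def varList : Fml V → List V
  | var p => [p]
  | neg φ => varList φ
  | imp φ ψ => varList φ ++ varList ψ

/-- A formula is negation-free if it contains no `¬`. -/
def NegFree : Fml V → Prop
  | var _ => True
  | neg _ => False
  | imp φ ψ => NegFree φ ∧ NegFree ψ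

/-- The rightmost variable (rightmost leaf). -/
def rightmost : Fml V → V
  | var p => p
  | neg φ => rightmost φ
  | imp _ ψ => rightmost ψ

/-- Whether a formula contains at least one `¬`. -/
def HasNeg : Fml V → Prop
  | var _ => False
  | neg _ => True
  | imp φ ψ => HasNeg φ ∨ HasNeg ψ

/-- Length of a formula. -/
def len : Fml V → ℕ
  | var _ => 1
  | neg φ => len φ + 1
  | imp φ ψ => len φ + len ψ + 1

/-- Number of occurrences of `¬`. -/
def negCount : Fml V → ℕ
  | var _ => 0
  | neg φ => negCount φ + 1
  | imp φ ψ => negCount φ + negCount ψ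

end Fml

namespace Fml
variable {V : Type}

theorem eval_congr {v w : V → Bool} (ψ : Fml V) (h : ∀ q ∈ ψ.varList, v q = w q) :
    eval v ψ = eval w ψ := by
  induction ψ with
  | var q => exact h q (by simp [varList])
  | neg ψ ih => simp only [eval]; rw [ih (fun q hq => h q (by simpa [varList] using hq))]
  | imp a b iha ihb =>
      simp only [eval]
      rw [iha (fun q hq => h q (by simp [varList, hq])),
          ihb (fun q hq => h q (by simp [varList, hq]))]

theorem eval_true_of_all_true {v : V → Bool} (ψ : Fml V) (hnf : NegFree ψ)
    (h : ∀ q ∈ ψ.varList, v q = true) : eval v ψ = true := by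
  induction ψ with
  | var q => exact h q (by simp [varList])
  | neg ψ ih => exact hnf.elim
  | imp a b iha ihb =>
      simp only [eval]
      rw [ihb hnf.2 (fun q hq => h q (by simp [varList, hq]))]
      simp

theorem rightmost_mem (ψ : Fml V) : rightmost ψ ∈ varList ψ := by
  induction ψ with
  | var q => simp [rightmost, varList]
  | neg ψ ih => simpa [rightmost, varList] using ih
  | imp a b iha ihb =>
      simp only [rightmost, varList, List.mem_append]
      exact Or.inr ihb

theorem eval_false_of [DecidableEq V] {v : V → Bool} (ψ : Fml V) :
    NegFree ψ → (varList ψ).count (rightmost ψ) = 1 →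
    v (rightmost ψ) = false →
    (∀ q ∈ varList ψ, q ≠ rightmost ψ → v q = true) →
    eval v ψ = false := by
  induction ψ with
  | var q => intro _ _ hr _; simpa [eval, rightmost] using hr
  | neg ψ ih => intro h; exact h.elim
  | imp a b iha ihb =>
      intro hnf hc hr ho
      have hmem : rightmost b ∈ varList b := rightmost_mem b
      have hcb : 1 ≤ (varList b).count (rightmost b) := List.count_pos_iff.mpr hmem
      have hc' : (varList a).count (rightmost b) + (varList b).count (rightmost b) = 1 := by
        simpa [varList, rightmost, List.count_append] using hc
      have hca : (varList a).count (rightmost b) = 0 := by omega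
      have hnotmem : rightmost b ∉ varList a := by
        rw [← List.count_eq_zero] at *; exact hca
      have ha : eval v a = true := eval_true_of_all_true a hnf.1 (fun q hq =>
        ho q (by simp [varList, hq]) (fun h => hnotmem (h ▸ hq)))
      have hb : eval v b = false := ihb hnf.2 (by omega) hr
        (fun q hq => ho q (by simp [varList, hq]))
      simp [eval, ha, hb, rightmost]

theorem exists_eval_false [DecidableEq V] (ψ : Fml V) :
    NegFree ψ → (varList ψ).Nodup → ∃ v : V → Bool, eval v ψ = false := by
  induction ψ with
  | var q => intro _ _; exact ⟨fun _ => false, rfl⟩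
  | neg ψ ih => intro h; exact h.elim
  | imp a b iha ihb =>
      intro hnf hnd
      rw [show varList (a.imp b) = varList a ++ varList b from rfl, List.nodup_append] at hnd
      obtain ⟨v₀, hv₀⟩ := ihb hnf.2 hnd.2.1
      refine ⟨fun q => if q ∈ varList b then v₀ q else true, ?_⟩
      have ha : eval (fun q => if q ∈ varList b then v₀ q else true) a = true :=
        eval_true_of_all_true a hnf.1 (fun q hq => if_neg (fun h => hnd.2.2 q hq q h rfl))
      have hb : eval (fun q => if q ∈ varList b then v₀ q else true) b = false := by
        rw [eval_congr (w := v₀) b (fun q hq => if_pos hq)]; exact hv₀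
      simp only [eval, ha, hb]; rfl

theorem exists_eval_true_p_false [DecidableEq V] (p : V) (ψ : Fml V) :
    NegFree ψ → (varList ψ).Nodup → p ∈ varList ψ → ψ ≠ var p →
    ∃ v : V → Bool, v p = false ∧ eval v ψ = true := by
  induction ψ with
  | var q =>
      intro _ _ hm hne
      simp [varList] at hm
      exact absurd (by rw [hm]) hne
  | neg ψ ih => intro h; exact h.elim
  | imp a b iha ihb =>
      intro hnf hnd hm hne
      rw [show varList (a.imp b) = varList a ++ varList b from rfl, List.nodup_append] at hnd
      by_cases hpb : p ∈ varList b
      · by_cases hbv : b = var p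
        · have hpa : p ∉ varList a := fun h => hnd.2.2 p h p hpb rfl
          obtain ⟨v₀, hv₀⟩ := exists_eval_false a hnf.1 hnd.1
          refine ⟨fun q => if q ∈ varList a then v₀ q else false, by simp [hpa], ?_⟩
          have ha : eval (fun q => if q ∈ varList a then v₀ q else false) a = false := by
            rw [eval_congr (w := v₀) a (fun q hq => if_pos hq)]; exact hv₀
          simp only [eval, ha]; rfl
        · obtain ⟨v₀, hp0, hv₀⟩ := ihb hnf.2 hnd.2.1 hpb hbv
          refine ⟨fun q => if q ∈ varList b then v₀ q else true, by simp [hpb, hp0], ?_⟩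
          have hb : eval (fun q => if q ∈ varList b then v₀ q else true) b = true := by
            rw [eval_congr (w := v₀) b (fun q hq => if_pos hq)]; exact hv₀
          simp only [eval, hb]; simp
      · refine ⟨fun q => if q = p then false else true, by simp, ?_⟩
        have hb : eval (fun q => if q = p then false else true) b = true :=
          eval_true_of_all_true b hnf.2 (fun q hq => if_neg (fun (h : q = p) => hpb (h ▸ hq)))
        simp only [eval, hb]; simp

theorem varList_foldr (l : List (Fml V)) (c : Fml V) :
    varList (l.foldr imp c) = (l.map varList).flatten ++ varList c := by
  induction l with
  | nil => simp
  | cons a l ih => simp [varList, ih, List.append_assoc]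

end Fml

theorem tautology_minimal_structure {V : Type} [DecidableEq V] (φ : Fml V) (p : V)
    (htaut : ∀ v : V → Bool, Fml.eval v φ = true)
    (hnf : Fml.NegFree φ)
    (hp2 : (Fml.varList φ).count p = 2)
    (hothers : ∀ q ∈ Fml.varList φ, q ≠ p → (Fml.varList φ).count q = 1) :
    ∃ (l : List (Fml V)) (η : Fml V),
      φ = l.foldr Fml.imp (Fml.imp (Fml.var p) η) ∧
      Fml.NegFree η ∧ (Fml.varList η).Nodup ∧ Fml.rightmost η = p ∧
      (∀ ψ ∈ l, Fml.NegFree ψ ∧ (Fml.varList ψ).Nodup ∧ p ∉ Fml.varList ψ) ∧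
      List.Pairwise (fun l₁ l₂ => l₁.Disjoint l₂) (l.map Fml.varList ++ [Fml.varList η]) := by
  revert htaut hnf hp2 hothers
  induction φ with
  | var q =>
      intro _ _ hp2 _
      by_cases h : p = q <;> simp [Fml.varList, h, List.count_cons, eq_comm (a := q)] at hp2
  | neg ψ ih => intro _ hnf _ _; exact hnf.elim
  | imp a b iha ihb =>
      intro htaut hnf hp2 hothers
      have hvl : Fml.varList (a.imp b) = Fml.varList a ++ Fml.varList b := rfl
      have hcount : ∀ q, (Fml.varList (a.imp b)).count q
          = (Fml.varList a).count q + (Fml.varList b).count q := fun q => by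
        simp [hvl, List.count_append]
      have hsum : (Fml.varList a).count p + (Fml.varList b).count p = 2 := by
        rw [← hcount p]; exact hp2
      have hle1 : ∀ q, q ≠ p → (Fml.varList a).count q + (Fml.varList b).count q ≤ 1 := by
        intro q hq
        rcases Nat.eq_zero_or_pos ((Fml.varList (a.imp b)).count q) with h0 | hpos
        · rw [hcount q] at h0; omega
        · have hm : q ∈ Fml.varList (a.imp b) := List.count_pos_iff.mp hpos
          have := hothers q hm hq; rw [hcount q] at this; omega
      have hndA : (Fml.varList a).count p ≤ 1 → (Fml.varList a).Nodup := by
        intro h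
        rw [List.nodup_iff_count_le_one]
        intro q
        by_cases hq : q = p
        · subst hq; exact h
        · have := hle1 q hq; omega
      have hndB : (Fml.varList b).count p ≤ 1 → (Fml.varList b).Nodup := by
        intro h
        rw [List.nodup_iff_count_le_one]
        intro q
        by_cases hq : q = p
        · subst hq; exact h
        · have := hle1 q hq; omega
      have key : ∀ v : V → Bool, Fml.eval v a = true → Fml.eval v b = false → False := by
        intro v hva hvb
        have := htaut v
        simp only [Fml.eval, hva, hvb] at this
        simp at this
      have h3 : (Fml.varList a).count p = 0 ∨ (Fml.varList a).count p = 1 ∨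
          (Fml.varList a).count p ≥ 2 := by omega
      rcases h3 with hA | hA | hA
      · -- p occurs 0 times in a, twice in b: recurse on b
        have hpa : p ∉ Fml.varList a := List.count_eq_zero.mp hA
        have hdisj : (Fml.varList a).Disjoint (Fml.varList b) := by
          intro q hqa hqb
          have hq : q ≠ p := fun h => hpa (h ▸ hqa)
          have h1 := List.count_pos_iff.mpr hqa
          have h2 := List.count_pos_iff.mpr hqb
          have := hle1 q hq
          omega
        have htb : ∀ v : V → Bool, Fml.eval v b = true := by
          intro v
          have ha : Fml.eval (fun q => if q ∈ Fml.varList b then v q else true) a = true :=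
            Fml.eval_true_of_all_true a hnf.1 (fun q hq => if_neg (fun h => hdisj hq h))
          have := htaut (fun q => if q ∈ Fml.varList b then v q else true)
          simp only [Fml.eval, ha] at this
          have hb' : Fml.eval (fun q => if q ∈ Fml.varList b then v q else true) b = true := by
            simpa using this
          rw [Fml.eval_congr (w := fun q => if q ∈ Fml.varList b then v q else true) b
            (fun q hq => (if_pos hq).symm)]
          exact hb'
        have hp2b : (Fml.varList b).count p = 2 := by omega
        have hothb : ∀ q ∈ Fml.varList b, q ≠ p → (Fml.varList b).count q = 1 := by
          intro q hq hqp
          have h1 := List.count_pos_iff.mpr hq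
          have := hle1 q hqp; omega
        obtain ⟨l', η, heq, hηnf, hηnd, hηr, hl', hpw⟩ := ihb htb hnf.2 hp2b hothb
        refine ⟨a :: l', η, ?_, hηnf, hηnd, hηr, ?_, ?_⟩
        · simp only [List.foldr_cons, ← heq]
        · intro ψ hψ
          rcases List.mem_cons.mp hψ with hψ | hψ
          · subst hψ; exact ⟨hnf.1, hndA (by omega), hpa⟩
          · exact hl' ψ hψ
        · simp only [List.map_cons, List.cons_append]
          refine List.pairwise_cons.mpr ⟨?_, hpw⟩
          intro L hL q hqa hqL
          have hLsub : L ⊆ Fml.varList b := by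
            rw [heq, Fml.varList_foldr]
            rcases List.mem_append.mp hL with hL | hL
            · obtain ⟨ψ, hψ, rfl⟩ := List.mem_map.mp hL
              intro x hx
              exact List.mem_append_left _
                (List.mem_flatten.mpr ⟨Fml.varList ψ, List.mem_map.mpr ⟨ψ, hψ, rfl⟩, hx⟩)
            · simp only [List.mem_singleton] at hL; subst hL
              intro x hx
              exact List.mem_append_right _ (by simp [Fml.varList, hx])
          exact hdisj hqa (hLsub hqL)
      · -- p once in a, once in b
        have hcb : (Fml.varList b).count p = 1 := by omega
        have hpb : p ∈ Fml.varList b := List.count_pos_iff.mp (by omega)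
        have hpa : p ∈ Fml.varList a := List.count_pos_iff.mp (by omega)
        have hrb : Fml.rightmost b = p := by
          by_contra hr
          have hrm : Fml.rightmost b ∈ Fml.varList b := Fml.rightmost_mem b
          have hcr : (Fml.varList b).count (Fml.rightmost b) = 1 := by
            have h1 := hle1 _ hr
            have h2 := List.count_pos_iff.mpr hrm
            omega
          have hra : Fml.rightmost b ∉ Fml.varList a := by
            intro h
            have := List.count_pos_iff.mpr h
            have := List.count_pos_iff.mpr hrm
            have := hle1 _ hr
            omega
          refine key (fun q => if q = Fml.rightmost b then false else true) ?_ ?_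
          · exact Fml.eval_true_of_all_true a hnf.1
              (fun q hq => if_neg (fun (h : q = Fml.rightmost b) => hra (h ▸ hq)))
          · exact Fml.eval_false_of b hnf.2 hcr (if_pos rfl)
              (fun q _ hqr => if_neg hqr)
        by_cases hav : a = Fml.var p
        · subst hav
          refine ⟨[], b, rfl, hnf.2, hndB (by omega), hrb, by simp, by simp⟩
        · have hnda : (Fml.varList a).Nodup := hndA (by omega)
          obtain ⟨v₀, hv0p, hv₀a⟩ := Fml.exists_eval_true_p_false p a hnf.1 hnda hpa hav
          exact absurd (key
            (fun q => if q ∈ Fml.varList a then v₀ q else if q = p then false else true)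
            (by rw [Fml.eval_congr (w := v₀) a (fun q hq => if_pos hq)]; exact hv₀a)
            (by
              apply Fml.eval_false_of b hnf.2 (by rw [hrb]; exact hcb)
              · rw [hrb]
                show (if p ∈ Fml.varList a then v₀ p else if p = p then false else true) = false
                rw [if_pos hpa]; exact hv0p
              · intro q hq hqr
                rw [hrb] at hqr
                have hqa : q ∉ Fml.varList a := by
                  intro h
                  have := List.count_pos_iff.mpr h
                  have := List.count_pos_iff.mpr hq
                  have := hle1 q hqr
                  omega
                show (if q ∈ Fml.varList a then v₀ q else if q = p then false else true) = true
                rw [if_neg hqa, if_neg hqr])) id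
      · -- p twice in a
        have hcb : (Fml.varList b).count p = 0 := by omega
        have hpb : p ∉ Fml.varList b := List.count_eq_zero.mp hcb
        obtain ⟨v₀, hv₀⟩ := Fml.exists_eval_false b hnf.2 (hndB (by omega))
        have hdisj : ∀ q, q ∈ Fml.varList a → q ∉ Fml.varList b := by
          intro q hqa hqb
          have hq : q ≠ p := fun h => hpb (h ▸ hqb)
          have h1 := List.count_pos_iff.mpr hqa
          have h2 := List.count_pos_iff.mpr hqb
          have := hle1 q hq
          omega
        exact absurd (key (fun q => if q ∈ Fml.varList b then v₀ q else true)
          (Fml.eval_true_of_all_true a hnf.1 (fun q hq => if_neg (hdisj q hq)))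
          (by rw [Fml.eval_congr (w := v₀) b (fun q hq => if_pos hq)]; exact hv₀)) id
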